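/- Let e = (e₁,...,e_n) and f = (f₁,...,f_n) be nondecreasing tuples of nonnegative integers with e_i ≥ f_i and e_j - f_j ≤ e_i - f_i for all j ≤ i (downward compatibility). Let E = ∏ Z/p^{e_i}Z and F = ∏ Z/p^{f_i}Z, and let π: E → F be the product of the canonical projections. Then for every integer matrix A representing an automorphism α of E, A also represents an automorphism α̃ of F, ker(π) is α-invariant, and π∘α = α̃∘π. -/

import Mathlib

open Finset

section Aux
variable (p n : ℕ)

/-- The additive endomorphism of `∏ ZMod (p ^ g i)` given by a matrix `C`
satisfying the divisibility condition. -/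
noncomputable def matPhi (g : Fin n → ℕ) (C : Matrix (Fin n) (Fin n) ℤ)
    (hC : ∀ i j, (p ^ g i : ℤ) ∣ p ^ g j * C i j) :
    (∀ i, ZMod (p ^ g i)) →+ (∀ i, ZMod (p ^ g i)) where
  toFun x i := ∑ j, ZMod.lift (p ^ g j)
      ⟨(Int.castAddHom (ZMod (p ^ g i))).comp (AddMonoidHom.mulLeft (C i j)), by
        have h : ((p ^ g i : ℕ) : ℤ) ∣ C i j * ((p ^ g j : ℕ) : ℤ) := by
          push_cast
          rw [mul_comm]
          exact hC i j
        show ((C i j * ((p ^ g j : ℕ) : ℤ) : ℤ) : ZMod (p ^ g i)) = 0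
        exact (ZMod.intCast_zmod_eq_zero_iff_dvd _ _).mpr h⟩ (x j)
  map_zero' := by funext i; simp
  map_add' x y := by funext i; simp [← Finset.sum_add_distrib]

theorem matPhi_apply_cast (g : Fin n → ℕ) (C : Matrix (Fin n) (Fin n) ℤ)
    (hC : ∀ i j, (p ^ g i : ℤ) ∣ p ^ g j * C i j) (m : Fin n → ℤ) (i : Fin n) :
    matPhi p n g C hC (fun j => ((m j : ℤ) : ZMod (p ^ g j))) i
      = ((∑ j, C i j * m j : ℤ) : ZMod (p ^ g i)) := by
  simp [matPhi, ZMod.lift_coe]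

/-- Any matrix representing an additive endomorphism satisfies the divisibility
condition. -/
theorem rep_dvd (hp : p.Prime) (g : Fin n → ℕ) (C : Matrix (Fin n) (Fin n) ℤ)
    (γ : (∀ i, ZMod (p ^ g i)) ≃+ (∀ i, ZMod (p ^ g i)))
    (hγ : ∀ j, γ (Pi.single j 1) = fun i => ((C i j : ℤ) : ZMod (p ^ g i)))
    (i j : Fin n) : (p ^ g i : ℤ) ∣ p ^ g j * C i j := by
  have h0 : (p ^ g j : ℕ) • γ (Pi.single j 1) = 0 := by
    rw [← map_nsmul, ← Pi.single_smul]
    have : (p ^ g j : ℕ) • (1 : ZMod (p ^ g j)) = 0 := by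
      simp [nsmul_eq_mul, ZMod.natCast_self]
    rw [this, Pi.single_zero, map_zero]
  have h1 : (p ^ g j : ℕ) • ((C i j : ℤ) : ZMod (p ^ g i)) = 0 := by
    have := congrFun h0 i
    rwa [hγ j] at this
  have h2 : (((p ^ g j : ℕ) * C i j : ℤ) : ZMod (p ^ g i)) = 0 := by
    rw [← h1]; push_cast; ring
  have h3 : ((p ^ g i : ℕ) : ℤ) ∣ ((p ^ g j : ℕ) : ℤ) * C i j :=
    (ZMod.intCast_zmod_eq_zero_iff_dvd _ _).mp h2
  push_cast at h3
  exact h3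

/-- Formula for an endomorphism represented by a matrix. -/
theorem equiv_apply_eq (hp : p.Prime) (g : Fin n → ℕ) (C : Matrix (Fin n) (Fin n) ℤ)
    (γ : (∀ i, ZMod (p ^ g i)) ≃+ (∀ i, ZMod (p ^ g i)))
    (hγ : ∀ j, γ (Pi.single j 1) = fun i => ((C i j : ℤ) : ZMod (p ^ g i)))
    (x : ∀ i, ZMod (p ^ g i)) (i : Fin n) :
    γ x i = ((∑ j, C i j * ((x j).val : ℤ) : ℤ) : ZMod (p ^ g i)) := by
  haveI : ∀ k, NeZero (p ^ g k) := fun k => ⟨(pow_pos hp.pos _).ne'⟩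
  have hx : x = ∑ j, (x j).val • Pi.single j (1 : ZMod (p ^ g j)) := by
    have h2 : ∀ j, (x j).val • Pi.single (M := fun i => ZMod (p ^ g i)) j 1
        = Pi.single (M := fun i => ZMod (p ^ g i)) j (x j) := by
      intro j
      rw [← Pi.single_smul, nsmul_eq_mul, mul_one, ZMod.natCast_rightInverse (x j)]
    simp only [h2]
    exact (Finset.univ_sum_single x).symm
  conv_lhs => rw [hx]
  rw [map_sum, Finset.sum_apply, Int.cast_sum]
  refine Finset.sum_congr rfl fun j _ => ?_
  rw [map_nsmul, hγ j]
  simp only [Pi.smul_apply]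
  push_cast
  ring

end Aux

/-- Compatibility lemma (downward compatibility): if `e ≥ f` componentwise,
both nondecreasing, with `e_j - f_j ≤ e_i - f_i` for `j ≤ i`, then every
integer matrix `A` representing an automorphism `α` of `E = ∏ ℤ/p^{eᵢ}ℤ` also
represents an automorphism `β` of `F = ∏ ℤ/p^{fᵢ}ℤ`, the kernel of the
canonical projection `π : E → F` is `α`-invariant, and `π ∘ α = β ∘ π`. -/
theorem stmt8 (p : ℕ) (hp : p.Prime) (n : ℕ) (e f : Fin n → ℕ)
    (he : Monotone e) (hf : Monotone f) (hef : ∀ i, f i ≤ e i)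
    (hcomp : ∀ i j : Fin n, j ≤ i → e j - f j ≤ e i - f i)
    (A : Matrix (Fin n) (Fin n) ℤ)
    (α : (∀ i, ZMod (p ^ e i)) ≃+ (∀ i, ZMod (p ^ e i)))
    (hα : ∀ j, α (Pi.single j 1) = fun i => ((A i j : ℤ) : ZMod (p ^ e i))) :
    ∃ β : (∀ i, ZMod (p ^ f i)) ≃+ (∀ i, ZMod (p ^ f i)),
      (∀ j, β (Pi.single j 1) = fun i => ((A i j : ℤ) : ZMod (p ^ f i))) ∧
      (∀ x : ∀ i, ZMod (p ^ e i),
        β (fun i => ZMod.castHom (pow_dvd_pow p (hef i)) (ZMod (p ^ f i)) (x i)) =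
          fun i => ZMod.castHom (pow_dvd_pow p (hef i)) (ZMod (p ^ f i)) (α x i)) ∧
      (∀ x : ∀ i, ZMod (p ^ e i),
        (∀ i, ZMod.castHom (pow_dvd_pow p (hef i)) (ZMod (p ^ f i)) (x i) = 0) →
        ∀ i, ZMod.castHom (pow_dvd_pow p (hef i)) (ZMod (p ^ f i)) (α x i) = 0) := by
  haveI : ∀ k, NeZero (p ^ e k) := fun k => ⟨(pow_pos hp.pos _).ne'⟩
  haveI : ∀ k, NeZero (p ^ f k) := fun k => ⟨(pow_pos hp.pos _).ne'⟩
  -- matrix representing the inverse automorphism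
  set B : Matrix (Fin n) (Fin n) ℤ := fun i j => ((α.symm (Pi.single j 1) i).val : ℤ) with hBdef
  have hB : ∀ j, α.symm (Pi.single j 1) = fun i => ((B i j : ℤ) : ZMod (p ^ e i)) := by
    intro j
    funext i
    rw [hBdef]
    push_cast
    exact (ZMod.natCast_rightInverse _).symm
  -- divisibility transfer
  have transfer : ∀ (C : Matrix (Fin n) (Fin n) ℤ),
      (∀ i j, (p ^ e i : ℤ) ∣ p ^ e j * C i j) →
      (∀ i j, (p ^ f i : ℤ) ∣ p ^ f j * C i j) := by
    intro C hCe i j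
    by_cases hle : f i ≤ f j
    · exact dvd_mul_of_dvd_left (pow_dvd_pow _ hle) _
    · have hji : j ≤ i := by
        by_contra hij
        exact hle (hf (not_le.mp hij).le)
      have h1 := hcomp i j hji
      have h2 := hef i
      have h3 := hef j
      have hfe : f i - f j ≤ e i - e j ∧ e j ≤ e i := by omega
      have hei : e j + (e i - e j) = e i := by omega
      have hdA : (p : ℤ) ^ (e i - e j) ∣ C i j := by
        have := hCe i j
        rw [← hei, pow_add] at this
        exact (mul_dvd_mul_iff_left (pow_ne_zero (e j)
          (Int.natCast_ne_zero.mpr hp.pos.ne'))).mp this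
      have hdA2 : (p : ℤ) ^ (f i - f j) ∣ C i j :=
        dvd_trans (pow_dvd_pow _ hfe.1) hdA
      have hfi : f j + (f i - f j) = f i := by omega
      calc (p : ℤ) ^ f i = p ^ f j * p ^ (f i - f j) := by rw [← pow_add, hfi]
        _ ∣ p ^ f j * C i j := mul_dvd_mul_left _ hdA2
  have hAe := rep_dvd p n hp e A α hα
  have hBe := rep_dvd p n hp e B α.symm hB
  have hAf := transfer A hAe
  have hBf := transfer B hBe
  set π : (∀ i, ZMod (p ^ e i)) → (∀ i, ZMod (p ^ f i)) :=
    fun x i => ZMod.castHom (pow_dvd_pow p (hef i)) (ZMod (p ^ f i)) (x i) with hπdef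
  have hπcast : ∀ x : ∀ i, ZMod (p ^ e i),
      π x = fun j => ((((x j).val : ℤ)) : ZMod (p ^ f j)) := by
    intro x
    funext j
    rw [hπdef]
    simp only
    conv_lhs => rw [← ZMod.natCast_rightInverse (x j)]
    rw [map_natCast]
    simp
  -- key commutation property
  have key : ∀ (C : Matrix (Fin n) (Fin n) ℤ)
      (hCf : ∀ i j, (p ^ f i : ℤ) ∣ p ^ f j * C i j)
      (γ : (∀ i, ZMod (p ^ e i)) ≃+ (∀ i, ZMod (p ^ e i)))
      (hγ : ∀ j, γ (Pi.single j 1) = fun i => ((C i j : ℤ) : ZMod (p ^ e i)))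
      (x : ∀ i, ZMod (p ^ e i)),
      matPhi p n f C hCf (π x) = π (γ x) := by
    intro C hCf γ hγ x
    funext i
    rw [hπcast x, matPhi_apply_cast]
    rw [hπdef]
    simp only
    rw [equiv_apply_eq p n hp e C γ hγ x i, map_intCast]
  have hπsurj : ∀ y : ∀ i, ZMod (p ^ f i), ∃ x, π x = y := by
    intro y
    refine ⟨fun i => ((y i).val : ZMod (p ^ e i)), ?_⟩
    funext i
    rw [hπdef]
    simp only [map_natCast]
    exact ZMod.natCast_rightInverse _
  set β₀ := matPhi p n f A hAf with hβ₀
  set β₀' := matPhi p n f B hBf with hβ₀'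
  have hAB : ∀ x, β₀ (π x) = π (α x) := key A hAf α hα
  have hBA : ∀ x, β₀' (π x) = π (α.symm x) := key B hBf α.symm hB
  refine ⟨{ toFun := β₀, invFun := β₀',
            left_inv := ?_, right_inv := ?_, map_add' := β₀.map_add }, ?_, ?_, ?_⟩
  · intro y
    obtain ⟨x, rfl⟩ := hπsurj y
    rw [hAB, hBA, AddEquiv.symm_apply_apply]
  · intro y
    obtain ⟨x, rfl⟩ := hπsurj y
    rw [hBA, hAB, AddEquiv.apply_symm_apply]
  · intro j
    show β₀ (Pi.single j 1) = _
    have hsingle : (Pi.single j 1 : ∀ i, ZMod (p ^ f i))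
        = fun j' => (((if j' = j then 1 else 0 : ℤ)) : ZMod (p ^ f j')) := by
      funext j'
      by_cases h : j' = j
      · subst h; simp
      · simp [h, Pi.single_eq_of_ne h]
    rw [hsingle]
    funext i
    rw [hβ₀, matPhi_apply_cast]
    simp [Finset.sum_ite_eq']
  · intro x
    exact hAB x
  · intro x hx i
    have hx0 : π x = 0 := funext hx
    have h := hAB x
    rw [hx0, map_zero] at h
    exact (congrFun h.symm i)
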